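/- Let ((c̄,b̄),x̄) be in the graph of the argmin mapping S with 0_n ∉ conv{a_i : i ∈ I_{b̄}(x̄)}, and let V × U be an open neighborhood of ((c̄,b̄),x̄) such that M_{c,b}(x) ⊂ L_{c̄,b̄}(x̄) for all ((c,b),x) ∈ (V × U) ∩ gph S. Then also L_{c,b}(x) ⊂ L_{c̄,b̄}(x̄) for all ((c,b),x) ∈ (V × U) ∩ gph S. -/

import Mathlib

open Matrix Set Topology Filter
open scoped ENNReal

namespace QPLip

variable {n m : ℕ}

/-- The quadratic objective function `(1/2) xᵀQx + cᵀx`. -/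
noncomputable def obj (Q : Matrix (Fin n) (Fin n) ℝ) (c x : Fin n → ℝ) : ℝ :=
  (1 / 2) * (x ⬝ᵥ Q.mulVec x) + c ⬝ᵥ x

/-- The feasible set `F(b) = {x : aᵢ'x ≤ bᵢ, i = 1,…,m}`. -/
def Feas (A : Matrix (Fin m) (Fin n) ℝ) (b : Fin m → ℝ) : Set (Fin n → ℝ) :=
  {x | ∀ i, A i ⬝ᵥ x ≤ b i}

/-- The argmin (optimal set) mapping `S(c,b)`. -/
noncomputable def argminSet (Q : Matrix (Fin n) (Fin n) ℝ) (A : Matrix (Fin m) (Fin n) ℝ)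
    (c : Fin n → ℝ) (b : Fin m → ℝ) : Set (Fin n → ℝ) :=
  {x | x ∈ Feas A b ∧ ∀ y ∈ Feas A b, obj Q c x ≤ obj Q c y}

/-- The active index set `I_b(x)`. -/
def activeIdx (A : Matrix (Fin m) (Fin n) ℝ) (b : Fin m → ℝ) (x : Fin n → ℝ) : Set (Fin m) :=
  {i | A i ⬝ᵥ x = b i}

/-- Conical convex hull of `{aᵢ : i ∈ D}` (equal to `{0}` when `D = ∅`). -/
def coneOf (A : Matrix (Fin m) (Fin n) ℝ) (D : Finset (Fin m)) : Set (Fin n → ℝ) :=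
  {v | ∃ lam : Fin m → ℝ, (∀ i, 0 ≤ lam i) ∧ v = ∑ i ∈ D, lam i • A i}

/-- The family `M_{c,b}(x)` of minimal KKT sets of indices at `((c,b),x)`. -/
def MinKKT (Q : Matrix (Fin n) (Fin n) ℝ) (A : Matrix (Fin m) (Fin n) ℝ)
    (c : Fin n → ℝ) (b : Fin m → ℝ) (x : Fin n → ℝ) : Set (Finset (Fin m)) :=
  {D | ↑D ⊆ activeIdx A b x ∧ -(Q.mulVec x + c) ∈ coneOf A D ∧
    ∀ D' : Finset (Fin m), D' ⊂ D → -(Q.mulVec x + c) ∉ coneOf A D'}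

/-- The extended family `L_{c,b}(x)` of KKT subsets of indices. -/
def ExtKKT (Q : Matrix (Fin n) (Fin n) ℝ) (A : Matrix (Fin m) (Fin n) ℝ)
    (c : Fin n → ℝ) (b : Fin m → ℝ) (x : Fin n → ℝ) : Set (Finset (Fin m)) :=
  {D | ↑D ⊆ activeIdx A b x ∧ LinearIndependent ℝ (fun i : D => A i.1) ∧
    -(Q.mulVec x + c) ∈ coneOf A D}

/-- Slater constraint qualification at `b`. -/
def Slater (A : Matrix (Fin m) (Fin n) ℝ) (b : Fin m → ℝ) : Prop :=
  ∃ y : Fin n → ℝ, ∀ i, A i ⬝ᵥ y < b i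

/-- The Nürnberger condition at `((c,b),x)`. -/
def NCond (Q : Matrix (Fin n) (Fin n) ℝ) (A : Matrix (Fin m) (Fin n) ℝ)
    (c : Fin n → ℝ) (b : Fin m → ℝ) (x : Fin n → ℝ) : Prop :=
  Slater A b ∧ ∀ D : Finset (Fin m), ↑D ⊆ activeIdx A b x →
    -(Q.mulVec x + c) ∈ coneOf A D → n ≤ D.card

/-- The submatrix `A_D` of `A` formed by the rows indexed by `D`. -/
def subA (A : Matrix (Fin m) (Fin n) ℝ) (D : Finset (Fin m)) : Matrix D (Fin n) ℝ :=
  Matrix.of fun i j => A i.1 j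

/-- The KKT matrix `M_D = [[Q, A_Dᵀ],[A_D, 0]]`. -/
noncomputable def MD (Q : Matrix (Fin n) (Fin n) ℝ) (A : Matrix (Fin m) (Fin n) ℝ)
    (D : Finset (Fin m)) : Matrix (Fin n ⊕ D) (Fin n ⊕ D) ℝ :=
  Matrix.fromBlocks Q (subA A D)ᵀ (subA A D) 0

/-- The feasible set of the subproblem `P_D`. -/
def FeasD (A : Matrix (Fin m) (Fin n) ℝ) (D : Finset (Fin m)) (β : D → ℝ) :
    Set (Fin n → ℝ) :=
  {x | ∀ i : D, A i.1 ⬝ᵥ x ≤ β i}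

/-- The optimal set mapping `S_D(c,β)` of the subproblem `P_D(c,β)`. -/
noncomputable def argminD (Q : Matrix (Fin n) (Fin n) ℝ) (A : Matrix (Fin m) (Fin n) ℝ)
    (D : Finset (Fin m)) (c : Fin n → ℝ) (β : D → ℝ) : Set (Fin n → ℝ) :=
  {x | x ∈ FeasD A D β ∧ ∀ y ∈ FeasD A D β, obj Q c x ≤ obj Q c y}

/-- Restriction `b_D` of the right-hand side `b` to the indices in `D`. -/
def restr (b : Fin m → ℝ) (D : Finset (Fin m)) : D → ℝ := fun i => b i.1

/-- `nrm` is a norm on `ℝⁿ`. -/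
structure IsNorm (nrm : (Fin n → ℝ) → ℝ) : Prop where
  definite : ∀ x, nrm x = 0 → x = 0
  smul : ∀ (t : ℝ) (x : Fin n → ℝ), nrm (t • x) = |t| * nrm x
  triangle : ∀ x y, nrm (x + y) ≤ nrm x + nrm y

/-- The dual norm `‖c‖_* = sup {|c'y| : ‖y‖ ≤ 1}`. -/
noncomputable def dualNrm (nrm : (Fin n → ℝ) → ℝ) (c : Fin n → ℝ) : ℝ :=
  sSup {r | ∃ y, nrm y ≤ 1 ∧ r = |c ⬝ᵥ y|}

/-- Distance (with respect to the norm `nrm`) from a point to a set, with `d(x,∅) = +∞`. -/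
noncomputable def dSet (nrm : (Fin n → ℝ) → ℝ) (x : Fin n → ℝ) (S : Set (Fin n → ℝ)) :
    ℝ≥0∞ :=
  ⨅ s ∈ S, ENNReal.ofReal (nrm (x - s))

/-- The distance `max {‖c₁-c₂‖_*, ‖β₁-β₂‖_∞}` in a parameter space `ℝⁿ × ℝ^ι`. -/
noncomputable def pDist (nrm : (Fin n → ℝ) → ℝ) {ι : Type} [Fintype ι]
    (p q : (Fin n → ℝ) × (ι → ℝ)) : ℝ :=
  max (dualNrm nrm (p.1 - q.1)) ‖p.2 - q.2‖

/-- The Aubin property of a set-valued mapping `G` at `(pbar, xbar)`, where the parameter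
space carries the distance `pd` and `ℝⁿ` the norm `nrm`. -/
def AubinAt {P : Type*} [TopologicalSpace P] (nrm : (Fin n → ℝ) → ℝ) (pd : P → P → ℝ)
    (G : P → Set (Fin n → ℝ)) (pbar : P) (xbar : Fin n → ℝ) : Prop :=
  ∃ κ : ℝ, 0 ≤ κ ∧ ∃ V ∈ 𝓝 pbar, ∃ U ∈ 𝓝 xbar,
    ∀ p1 ∈ V, ∀ p2 ∈ V, ∀ x2 ∈ G p2 ∩ U,
      dSet nrm x2 (G p1) ≤ ENNReal.ofReal (κ * pd p2 p1)

/-- The Lipschitz modulus of `G` at `(pbar, xbar)`: the infimum in `[0,+∞]` of all Lipschitz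
constants `κ` in the definition of the Aubin property (`+∞` if the Aubin property fails). -/
noncomputable def lipMod {P : Type*} [TopologicalSpace P] (nrm : (Fin n → ℝ) → ℝ)
    (pd : P → P → ℝ) (G : P → Set (Fin n → ℝ)) (pbar : P) (xbar : Fin n → ℝ) : ℝ≥0∞ :=
  ⨅ κ ∈ {κ : ℝ | 0 ≤ κ ∧ ∃ V ∈ 𝓝 pbar, ∃ U ∈ 𝓝 xbar,
    ∀ p1 ∈ V, ∀ p2 ∈ V, ∀ x2 ∈ G p2 ∩ U,
      dSet nrm x2 (G p1) ≤ ENNReal.ofReal (κ * pd p2 p1)}, ENNReal.ofReal κ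

/-- Strong Lipschitz stability of `G` at `pbar`: single-valuedness in a neighborhood of
`pbar` together with Lipschitz continuity there. -/
def StrongLipStable {P : Type*} [TopologicalSpace P] (nrm : (Fin n → ℝ) → ℝ)
    (pd : P → P → ℝ) (G : P → Set (Fin n → ℝ)) (pbar : P) : Prop :=
  ∃ V ∈ 𝓝 pbar, (∀ p ∈ V, ∃! x, x ∈ G p) ∧
    ∃ κ : ℝ, 0 ≤ κ ∧ ∀ p1 ∈ V, ∀ p2 ∈ V, ∀ x1 ∈ G p1, ∀ x2 ∈ G p2,
      nrm (x1 - x2) ≤ κ * pd p1 p2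

/-- The matrix `(I_n | 0_{n×|D|})`. -/
noncomputable def projMat (n : ℕ) {m : ℕ} (D : Finset (Fin m)) :
    Matrix (Fin n) (Fin n ⊕ D) ℝ :=
  Matrix.fromCols 1 0

/-- Operator norm of a matrix from `(ℝ^ι, ‖·‖_∞)` to `(ℝⁿ, nrm)`. -/
noncomputable def opNormInf (nrm : (Fin n → ℝ) → ℝ) {ι : Type} [Fintype ι]
    (B : Matrix (Fin n) ι ℝ) : ℝ :=
  sSup {r | ∃ v : ι → ℝ, ‖v‖ ≤ 1 ∧ r = nrm (B.mulVec v)}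

/-- Operator norm of a matrix from `(ℝⁿ × ℝ^ι, max {‖·‖_*, ‖·‖_∞})` to `(ℝⁿ, nrm)`. -/
noncomputable def opNormMixed (nrm : (Fin n → ℝ) → ℝ) {ι : Type} [Fintype ι]
    (B : Matrix (Fin n) (Fin n ⊕ ι) ℝ) : ℝ :=
  sSup {r | ∃ (α : Fin n → ℝ) (β : ι → ℝ), dualNrm nrm α ≤ 1 ∧ ‖β‖ ≤ 1 ∧
    r = nrm (B.mulVec (Sum.elim α β))}


/-- The matrix `A_Dᵀ (A_D A_Dᵀ)⁻¹`, which is the two-sided inverse of `A_D` whenever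
`A_D` is square and invertible. -/
noncomputable def pinvA (A : Matrix (Fin m) (Fin n) ℝ) (D : Finset (Fin m)) :
    Matrix (Fin n) D ℝ :=
  (subA A D)ᵀ * ((subA A D) * (subA A D)ᵀ)⁻¹

end QPLip

open QPLip



/-- KKT sufficiency for the convex QP: if `x` is feasible and `-(Qx+c)` is a nonnegative
combination of active constraint gradients indexed by `D`, then `x` is a global minimizer. -/
theorem kkt_sufficient {n m : ℕ} (Q : Matrix (Fin n) (Fin n) ℝ) (hQ : Q.PosSemidef)
    (A : Matrix (Fin m) (Fin n) ℝ) (c : Fin n → ℝ) (b : Fin m → ℝ) (x : Fin n → ℝ)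
    (hfeas : x ∈ Feas A b) (D : Finset (Fin m)) (hD : ↑D ⊆ activeIdx A b x)
    (lam : Fin m → ℝ) (hlam : ∀ i, 0 ≤ lam i)
    (hrep : -(Q.mulVec x + c) = ∑ i ∈ D, lam i • A i) :
    x ∈ argminSet Q A c b := by
  refine ⟨hfeas, fun y hy => ?_⟩
  have hsymm : Qᵀ = Q := (Matrix.conjTranspose_eq_transpose_of_trivial Q).symm.trans hQ.1
  set d : Fin n → ℝ := y - x with hd
  -- symmetry of the bilinear form
  have hsym : ∀ u v : Fin n → ℝ, u ⬝ᵥ Q.mulVec v = v ⬝ᵥ Q.mulVec u := by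
    intro u v
    rw [Matrix.dotProduct_mulVec, ← Matrix.mulVec_transpose, hsymm, dotProduct_comm]
  have hpsd : 0 ≤ d ⬝ᵥ Q.mulVec d := by simpa using hQ.dotProduct_mulVec_nonneg d
  have hy' : y = x + d := by simp [hd]
  have hexpand : obj Q c y - obj Q c x
      = (1 / 2) * (d ⬝ᵥ Q.mulVec d) + (Q.mulVec x + c) ⬝ᵥ d := by
    rw [hy']
    simp only [obj, Matrix.mulVec_add, dotProduct_add, add_dotProduct]
    have hcomm : Q.mulVec x ⬝ᵥ (y - x) = x ⬝ᵥ Q.mulVec (y - x) :=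
      (dotProduct_comm _ _).trans (hsym _ _)
    rw [hsym (y - x) x, hcomm]; ring
  have hkey : 0 ≤ (Q.mulVec x + c) ⬝ᵥ d := by
    have h1 : (Q.mulVec x + c) ⬝ᵥ d = -((∑ i ∈ D, lam i • A i) ⬝ᵥ d) := by
      rw [← hrep]; simp [neg_dotProduct]
    have hdot : ∀ (t : Finset (Fin m)), (∑ i ∈ t, lam i • A i) ⬝ᵥ d = ∑ i ∈ t, lam i * (A i ⬝ᵥ d) := by
      intro t
      induction t using Finset.induction with
      | empty => simp
      | insert _ _ h ih =>
        simp [Finset.sum_insert h, add_dotProduct, smul_dotProduct, ih]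
    rw [h1, hdot, neg_nonneg]
    refine Finset.sum_nonpos fun i hi => ?_
    have hact : A i ⬝ᵥ x = b i := hD hi
    have hAd : A i ⬝ᵥ d ≤ 0 := by
      have : A i ⬝ᵥ y ≤ b i := hy i
      simp only [hd, dotProduct_sub, hact]
      linarith
    exact mul_nonpos_of_nonneg_of_nonpos (hlam i) hAd
  nlinarith [hexpand, hpsd, hkey]

/-- Uniqueness of representation over a linearly independent family indexed by `D`. -/
theorem rep_unique {n m : ℕ} (A : Matrix (Fin m) (Fin n) ℝ) (D : Finset (Fin m))
    (hind : LinearIndependent ℝ (fun i : D => A i.1)) (f g : Fin m → ℝ)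
    (h : ∑ i ∈ D, f i • A i = ∑ i ∈ D, g i • A i) : ∀ i ∈ D, f i = g i := by
  intro i hi
  have hsum : ∑ j : D, (f j.1 - g j.1) • A j.1 = 0 := by
    have h1 : ∑ j : D, f j.1 • A j.1 = ∑ j ∈ D, f j • A j :=
      Finset.sum_coe_sort D (fun j => f j • A j)
    have h2 : ∑ j : D, g j.1 • A j.1 = ∑ j ∈ D, g j • A j :=
      Finset.sum_coe_sort D (fun j => g j • A j)
    simp only [sub_smul, Finset.sum_sub_distrib, h1, h2, h, sub_self]
  have := Fintype.linearIndependent_iff.mp hind (fun j => f j.1 - g j.1) hsum ⟨i, hi⟩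
  linarith


/-- if `V × U` is an open neighborhood of `((c̄,b̄),x̄)` on which
`M_{c,b}(x) ⊆ L_{c̄,b̄}(x̄)` holds along `gph S`, then also `L_{c,b}(x) ⊆ L_{c̄,b̄}(x̄)`
there. -/
theorem statement10 {n m : ℕ} (hn : 0 < n) (hm : 0 < m)
    (Q : Matrix (Fin n) (Fin n) ℝ) (hQ : Q.PosSemidef)
    (A : Matrix (Fin m) (Fin n) ℝ) (cb : Fin n → ℝ) (bb : Fin m → ℝ) (xb : Fin n → ℝ)
    (hx : xb ∈ argminSet Q A cb bb)
    (h0 : (0 : Fin n → ℝ) ∉ convexHull ℝ ((fun i => A i) '' activeIdx A bb xb))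
    (V : Set ((Fin n → ℝ) × (Fin m → ℝ))) (U : Set (Fin n → ℝ))
    (hVopen : IsOpen V) (hUopen : IsOpen U) (hVmem : (cb, bb) ∈ V) (hUmem : xb ∈ U)
    (hML : ∀ (c : Fin n → ℝ) (b : Fin m → ℝ) (x : Fin n → ℝ),
      (c, b) ∈ V → x ∈ U → x ∈ argminSet Q A c b →
        MinKKT Q A c b x ⊆ ExtKKT Q A cb bb xb) :
    ∀ (c : Fin n → ℝ) (b : Fin m → ℝ) (x : Fin n → ℝ),
      (c, b) ∈ V → x ∈ U → x ∈ argminSet Q A c b →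
        ExtKKT Q A c b x ⊆ ExtKKT Q A cb bb xb := by
  intro c b x hcbV hxU hS D hD
  obtain ⟨hDact, hDind, lam, hlam, hrep⟩ := hD
  -- perturbation direction
  set s : Fin n → ℝ := ∑ i ∈ D, A i with hs
  -- choose ε > 0 with (c - ε • s, b) ∈ V
  have hcont : Continuous fun t : ℝ => ((c - t • s, b) : (Fin n → ℝ) × (Fin m → ℝ)) := by
    fun_prop
  have hopen : IsOpen ((fun t : ℝ => ((c - t • s, b) : (Fin n → ℝ) × (Fin m → ℝ))) ⁻¹' V) :=
    hVopen.preimage hcont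
  have h0mem : (0 : ℝ) ∈ (fun t : ℝ => ((c - t • s, b) : (Fin n → ℝ) × (Fin m → ℝ))) ⁻¹' V := by
    simpa using hcbV
  obtain ⟨δ, hδpos, hball⟩ := Metric.isOpen_iff.mp hopen 0 h0mem
  set ε : ℝ := δ / 2 with hε
  have hεpos : 0 < ε := by positivity
  have hεV : (c - ε • s, b) ∈ V := by
    apply hball
    simp only [Metric.mem_ball, Real.dist_eq, sub_zero]
    rw [abs_of_pos hεpos]
    linarith
  set c' : Fin n → ℝ := c - ε • s with hc'
  -- the new representation with strictly positive multipliers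
  have hrep' : -(Q.mulVec x + c') = ∑ i ∈ D, (lam i + ε) • A i := by
    have : -(Q.mulVec x + c') = -(Q.mulVec x + c) + ε • s := by
      simp only [hc']; abel
    rw [this, hrep, hs]; erw [Finset.smul_sum]
    rw [← Finset.sum_add_distrib]
    refine Finset.sum_congr rfl fun i _ => ?_
    rw [add_smul]
  -- x is a minimizer for the perturbed problem
  have hS' : x ∈ argminSet Q A c' b :=
    kkt_sufficient Q hQ A c' b x hS.1 D hDact (fun i => lam i + ε)
      (fun i => by have := hlam i; show 0 ≤ lam i + ε; linarith) hrep'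
  -- D is a minimal KKT set for the perturbed problem
  have hmin : D ∈ MinKKT Q A c' b x := by
    refine ⟨hDact, ⟨fun i => lam i + ε, fun i => by have := hlam i; show 0 ≤ lam i + ε; linarith, hrep'⟩, ?_⟩
    rintro D' hD' ⟨mu, hmu, hmurep⟩
    obtain ⟨j, hjD, hjD'⟩ := Finset.exists_of_ssubset hD'
    set g : Fin m → ℝ := fun i => if i ∈ D' then mu i else 0 with hg
    have hsumeq : ∑ i ∈ D', mu i • A i = ∑ i ∈ D, g i • A i := by
      rw [← Finset.sum_subset hD'.subset (fun i _ hi => by simp [hg, hi])]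
      exact Finset.sum_congr rfl fun i hi => by simp [hg, hi]
    have huniq := rep_unique A D hDind (fun i => lam i + ε) g
      (by rw [← hrep', hmurep, hsumeq]) j hjD
    have : g j = 0 := by simp [hg, hjD']
    have huniq' : lam j + ε = 0 := by simpa [this] using huniq
    have := hlam j
    linarith
  exact hML c' b x hεV hxU hS' hmin
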